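/- Let f̄: Ω → ℝ be an α-Hölder normalized potential (L_{f̄} 1 ≡ 1), γ_n(A|y) = L_{f̄}^n(1_A)(σ^n(y)), and let ν be a Borel probability measure with L_{f̄}* ν = ν. Let μ be a shift-invariant Borel probability measure with H_{Λ_n}(μ|ν) < ∞ for all n. Then for every y ∈ Ω and every n ≥ 1, H_{Λ_n}(μ | ν) = H_{Λ_n}(μ | γ_n(·|y)) + ∫_Ω [ S_n(f̄)(x_{Λ_n} y_{Λ_n^c}) − log ∫_Ω exp( S_n(f̄)(x_{Λ_n} z_{Λ_n^c}) ) dν(z) ] dμ(x). -/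

import Mathlib

open MeasureTheory Filter
open scoped Classical

noncomputable section

namespace Paper

variable {A : Type*} [MetricSpace A] [CompactSpace A] [MeasurableSpace A] [BorelSpace A]

/-- The left shift `σ` on `Ω = Aᴺ`. -/
def shift (x : ℕ → A) : ℕ → A := fun n => x (n + 1)

/-- Prepend a symbol: `cons a x = (a, x₀, x₁, …)`. -/
def cons (a : A) (x : ℕ → A) : ℕ → A := fun n =>
  match n with
  | 0 => a
  | n + 1 => x n

/-- The metric `d_Ω` on `Ω`. -/
def dOmega (x y : ℕ → A) : ℝ :=
  ∑' n : ℕ, (1 / 2 : ℝ) ^ (n + 1) * (dist (x n) (y n) / (1 + dist (x n) (y n)))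

/-- `f` is `α`-Hölder with respect to `d_Ω`. -/
def IsHolder (α : ℝ) (f : (ℕ → A) → ℝ) : Prop :=
  ∃ C : ℝ, 0 ≤ C ∧ ∀ x y, |f x - f y| ≤ C * dOmega x y ^ α

/-- The Ruelle transfer operator with a priori measure `p`. -/
def ruelle (p : Measure A) (f φ : (ℕ → A) → ℝ) : (ℕ → A) → ℝ :=
  fun x => ∫ a, Real.exp (f (cons a x)) * φ (cons a x) ∂p

/-- The normalized potential `f̄ = f + log h - log (h ∘ σ) - log λ`. -/
def fbar (f h : (ℕ → A) → ℝ) (lam : ℝ) : (ℕ → A) → ℝ :=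
  fun x => f x + Real.log (h x) - Real.log (h (shift x)) - Real.log lam

/-- Projection on the first `n` coordinates. -/
def proj (n : ℕ) (x : ℕ → A) : Fin n → A := fun i => x i

/-- Relative entropy `H(μ|ν)` of two measures, with value `+∞` unless
`μ ≪ ν` and the entropy integral is finite. -/
def relEnt {X : Type*} [MeasurableSpace X] (μ ν : Measure X) : EReal :=
  if μ ≪ ν ∧ Integrable (fun x => Real.log (μ.rnDeriv ν x).toReal) μ then
    ((∫ x, Real.log (μ.rnDeriv ν x).toReal ∂μ : ℝ) : EReal)
  else ⊤

/-- Relative entropy `H_{Λ_n}(μ|ν)` on the σ-algebra of the first `n` coordinates. -/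
def relEntN (n : ℕ) (μ ν : Measure (ℕ → A)) : EReal :=
  relEnt (μ.map (proj n)) (ν.map (proj n))

/-- The entropy `H_{Λ_n}(μ) = -H_{Λ_n}(μ | pᴺ)` relative to the a priori measure `p`. -/
def finEnt (p : Measure A) (μ : Measure (ℕ → A)) (n : ℕ) : EReal :=
  - relEnt (μ.map (proj n)) (Measure.pi fun _ : Fin n => p)

/-- The specific entropy `h^s(μ) = lim_n H_{Λ_n}(μ)/n` (defined as a `limsup`,
which coincides with the limit whenever the latter exists). -/
def specEnt (p : Measure A) (μ : Measure (ℕ → A)) : EReal :=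
  Filter.atTop.limsup fun n : ℕ => ((n : ℝ)⁻¹ : EReal) * finEnt p μ n

/-- Birkhoff sum `S_n(f)`. -/
def birkhoff (n : ℕ) (f : (ℕ → A) → ℝ) (x : ℕ → A) : ℝ :=
  ∑ i ∈ Finset.range n, f (shift^[i] x)

/-- The configuration `x_{Λ_n} y_{Λ_n^c}`. -/
def concatAt (n : ℕ) (x y : ℕ → A) : ℕ → A := fun i => if i < n then x i else y i

/-- Concatenation of a finite word with a configuration. -/
def wordCons (n : ℕ) (a : Fin n → A) (x : ℕ → A) : ℕ → A :=
  fun i => if h : i < n then a ⟨i, h⟩ else x (i - n)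

/-- The probability kernel `γ_n(·|y) = L_f^n(1_·)(σ^n y)`, realized concretely as the
image under `a ↦ a ⬝ σ^n(y)` of the measure on `A^n` with density
`a ↦ exp(S_n(f)(a ⬝ σ^n(y)))` with respect to `p^n`. -/
def gammaMeasure (p : Measure A) (f : (ℕ → A) → ℝ) (n : ℕ) (y : ℕ → A) :
    Measure (ℕ → A) :=
  Measure.map (fun a : Fin n → A => wordCons n a (shift^[n] y))
    ((Measure.pi fun _ : Fin n => p).withDensity
      fun a => ENNReal.ofReal (Real.exp (birkhoff n f (wordCons n a (shift^[n] y)))))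

-- Auxiliary lemmas
open scoped NNReal ENNReal

lemma continuous_shift : Continuous (shift (A := A)) :=
  continuous_pi fun n => continuous_apply (n + 1)

lemma continuous_shift_iterate (n : ℕ) : Continuous (shift (A := A))^[n] :=
  continuous_shift.iterate n

lemma continuous_cons : Continuous (fun p : A × (ℕ → A) => cons p.1 p.2) := by
  refine continuous_pi fun n => ?_
  cases n with
  | zero => exact continuous_fst
  | succ n => exact (continuous_apply n).comp continuous_snd

lemma continuous_proj (n : ℕ) : Continuous (proj (A := A) n) :=
  continuous_pi fun i => continuous_apply _

lemma continuous_wordCons (n : ℕ) :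
    Continuous (fun p : (Fin n → A) × (ℕ → A) => wordCons n p.1 p.2) := by
  refine continuous_pi fun i => ?_
  by_cases h : i < n
  · simpa [wordCons, h, Function.comp_def] using (continuous_apply (⟨i, h⟩ : Fin n)).comp continuous_fst
  · simpa [wordCons, h, Function.comp_def] using (continuous_apply (i - n)).comp continuous_snd

lemma shift_cons (a : A) (x : ℕ → A) : shift (cons a x) = x := rfl

lemma proj_wordCons (n : ℕ) (a : Fin n → A) (x : ℕ → A) : proj n (wordCons n a x) = a := by
  funext i
  simp [proj, wordCons, i.isLt]

lemma shift_iterate_apply (n : ℕ) (y : ℕ → A) (i : ℕ) : shift^[n] y i = y (i + n) := by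
  induction n generalizing y with
  | zero => rfl
  | succ n ih =>
      rw [Function.iterate_succ_apply, ih]
      rfl

lemma wordCons_proj (n : ℕ) (x y : ℕ → A) :
    wordCons n (proj n x) (shift^[n] y) = concatAt n x y := by
  funext i
  by_cases h : i < n
  · simp [wordCons, concatAt, h, proj]
  · simp [wordCons, concatAt, h, shift_iterate_apply, Nat.sub_add_cancel (Nat.le_of_not_lt h)]

lemma cons_wordCons (n : ℕ) (b : A) (a : Fin n → A) (z : ℕ → A) :
    cons b (wordCons n a z) = wordCons (n + 1) (Fin.cons b a) z := by
  funext i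
  cases i with
  | zero => simp [cons, wordCons]
  | succ i =>
      by_cases h : i < n
      · have h' : i + 1 < n + 1 := Nat.succ_lt_succ h
        simp only [cons, wordCons, h, h', dif_pos]
        exact (Fin.cons_succ (α := fun _ => A) b a ⟨i, h⟩).symm
      · have h' : ¬ i + 1 < n + 1 := fun hc => h (Nat.lt_of_succ_lt_succ hc)
        simp [cons, wordCons, h, h', Nat.succ_sub_succ]

lemma birkhoff_succ (n : ℕ) (f : (ℕ → A) → ℝ) (x : ℕ → A) :
    birkhoff (n + 1) f x = birkhoff n f (shift x) + f x := by
  simp only [birkhoff]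
  rw [Finset.sum_range_succ']
  simp [Function.iterate_succ_apply]

lemma continuous_birkhoff (n : ℕ) {f : (ℕ → A) → ℝ} (hf : Continuous f) :
    Continuous (birkhoff n f) :=
  continuous_finset_sum _ fun i _ => hf.comp (continuous_shift_iterate i)

lemma dOmega_comm (x y : ℕ → A) : dOmega x y = dOmega y x := by
  unfold dOmega
  congr 1
  funext n
  rw [dist_comm]

-- continuity of Holder functions
lemma IsHolder.continuous {α : ℝ} (hα : 0 < α) {f : (ℕ → A) → ℝ} (hf : IsHolder α f) :
    Continuous f := by
  obtain ⟨C, hC0, hC⟩ := hf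
  rw [continuous_iff_continuousAt]
  intro x
  have hd : Continuous fun y => dOmega x y := by
    apply continuous_tsum (u := fun n : ℕ => (1 / 2 : ℝ) ^ (n + 1))
    · intro i
      have h1 : Continuous fun y : ℕ → A => dist (x i) (y i) :=
        (continuous_const.dist continuous_id').comp (continuous_apply i)
      exact (continuous_const.mul (h1.div (continuous_const.add h1)
        (fun y => by positivity)))
    · exact (summable_geometric_two.mul_left (1 / 2)).congr fun n => by ring
    · intro n y
      have h0 : (0:ℝ) ≤ dist (x n) (y n) := dist_nonneg
      have : dist (x n) (y n) / (1 + dist (x n) (y n)) ≤ 1 := by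
        rw [div_le_one (by positivity)]; linarith
      rw [Real.norm_eq_abs, abs_of_nonneg (by positivity)]
      calc (1 / 2 : ℝ) ^ (n + 1) * (dist (x n) (y n) / (1 + dist (x n) (y n)))
          ≤ (1 / 2 : ℝ) ^ (n + 1) * 1 := by
            apply mul_le_mul_of_nonneg_left this (by positivity)
        _ = (1 / 2 : ℝ) ^ (n + 1) := mul_one _
  have hd0 : dOmega x x = 0 := by simp [dOmega]
  have hten : Filter.Tendsto (fun y => C * dOmega x y ^ α) (nhds x) (nhds 0) := by
    have h1 : Filter.Tendsto (fun y => dOmega x y) (nhds x) (nhds 0) := by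
      have := hd.continuousAt (x := x)
      rwa [ContinuousAt, hd0] at this
    have h2 : Filter.Tendsto (fun t : ℝ => C * t ^ α) (nhds 0) (nhds 0) := by
      have := (Real.continuousAt_rpow_const 0 α (Or.inr hα.le)).tendsto
      rw [Real.zero_rpow hα.ne'] at this
      simpa using (this.const_mul C)
    exact h2.comp h1
  rw [ContinuousAt, tendsto_iff_dist_tendsto_zero]
  apply squeeze_zero (fun y => dist_nonneg) (fun y => ?_) hten
  rw [Real.dist_eq]
  calc |f y - f x| ≤ C * dOmega y x ^ α := hC y x
    _ = C * dOmega x y ^ α := by rw [dOmega_comm]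


section Helpers

variable {X : Type*} [MeasurableSpace X] [TopologicalSpace X] [CompactSpace X]
  [OpensMeasurableSpace X] [T2Space X]

/-- A continuous function on a compact space is integrable w.r.t. any finite measure. -/
lemma cont_integrable (μ : Measure X) [IsFiniteMeasure μ] {g : X → ℝ} (hg : Continuous g) :
    Integrable g μ :=
  hg.integrable_of_hasCompactSupport
    (IsCompact.of_isClosed_subset isCompact_univ (isClosed_tsupport g) (Set.subset_univ _))

/-- A continuous function on a compact space is bounded. -/
lemma cont_bound {g : X → ℝ} (hg : Continuous g) : ∃ M : ℝ, 0 ≤ M ∧ ∀ x, |g x| ≤ M := by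
  obtain ⟨C, hC⟩ := IsCompact.exists_bound_of_continuousOn isCompact_univ hg.continuousOn
  rcases isEmpty_or_nonempty X with h | h
  · exact ⟨0, le_refl _, fun x => (IsEmpty.false x).elim⟩
  · obtain ⟨x0⟩ := h
    exact ⟨C, (abs_nonneg (g x0)).trans (hC x0 trivial), fun x => hC x trivial⟩

/-- Two finite Borel measures on a compact metrizable space agreeing on integrals of
continuous functions are equal. -/
lemma ext_of_integral_eq [TopologicalSpace.PseudoMetrizableSpace X] [BorelSpace X]
    (μ ν : Measure X) [IsFiniteMeasure μ] [IsFiniteMeasure ν]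
    (h : ∀ g : X → ℝ, Continuous g → ∫ x, g x ∂μ = ∫ x, g x ∂ν) : μ = ν := by
  apply ext_of_forall_lintegral_eq_of_IsFiniteMeasure
  intro g
  have hg : Continuous fun x => (g x : ℝ) := NNReal.continuous_coe.comp g.continuous
  rw [lintegral_coe_eq_integral _ (cont_integrable μ hg),
    lintegral_coe_eq_integral _ (cont_integrable ν hg), h _ hg]

end Helpers

section Test
variable (p : Measure A) [IsProbabilityMeasure p]
example : CompactSpace (ℕ → A) := inferInstance
example : BorelSpace (ℕ → A) := inferInstance
example : TopologicalSpace.PseudoMetrizableSpace (ℕ → A) := inferInstance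
example (n : ℕ) : BorelSpace (Fin n → A) := inferInstance
example (n : ℕ) : IsProbabilityMeasure (Measure.pi fun _ : Fin n => p) := inferInstance
example (n : ℕ) : Measurable (proj (A := A) n) := (continuous_proj n).measurable
example : SecondCountableTopology (ℕ → A) := inferInstance
end Test

section Main

variable (p : Measure A) [IsProbabilityMeasure p]
variable {f : (ℕ → A) → ℝ}

lemma continuous_cons_left (x : ℕ → A) : Continuous fun a : A => cons a x :=
  continuous_cons.comp (continuous_id.prodMk continuous_const)

lemma continuous_cons_right (a : A) : Continuous fun x : ℕ → A => cons a x :=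
  continuous_cons.comp (continuous_const.prodMk continuous_id)

lemma continuous_wordCons_left (n : ℕ) (z : ℕ → A) :
    Continuous fun a : Fin n → A => wordCons n a z :=
  (continuous_wordCons n).comp (continuous_id.prodMk continuous_const)

lemma continuous_wordCons_right (n : ℕ) (a : Fin n → A) :
    Continuous (wordCons n a) := by
  refine continuous_pi fun i => ?_
  by_cases h : i < n
  · simpa [wordCons, h] using continuous_const (y := a ⟨i, h⟩)
  · simpa [wordCons, h] using continuous_apply (i - n)

lemma ruelle_continuous (hf : Continuous f) {φ : (ℕ → A) → ℝ} (hφ : Continuous φ) :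
    Continuous (ruelle p f φ) := by
  obtain ⟨Mf, hMf0, hMf⟩ := cont_bound hf
  obtain ⟨Mφ, hMφ0, hMφ⟩ := cont_bound hφ
  apply continuous_of_dominated (bound := fun _ => Real.exp Mf * Mφ)
  · intro x
    exact ((Real.continuous_exp.comp (hf.comp (continuous_cons_left x))).mul
      (hφ.comp (continuous_cons_left x))).aestronglyMeasurable
  · intro x
    filter_upwards with a
    rw [Real.norm_eq_abs, abs_mul, abs_of_nonneg (Real.exp_pos _).le]
    exact mul_le_mul (Real.exp_le_exp.2 ((abs_le.1 (hMf _)).2)) (hMφ _) (abs_nonneg _)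
      (Real.exp_pos _).le
  · exact integrable_const _
  · filter_upwards with a
    exact (Real.continuous_exp.comp (hf.comp (continuous_cons_right a))).mul
      (hφ.comp (continuous_cons_right a))

lemma integral_exp_cons (hnorm : ∀ x, ruelle p f (fun _ => 1) x = 1) (x : ℕ → A) :
    ∫ a, Real.exp (f (cons a x)) ∂p = 1 := by
  have := hnorm x
  unfold ruelle at this
  simpa using this

variable (ν : Measure (ℕ → A)) [IsProbabilityMeasure ν]

lemma nu_shift_inv (hf : Continuous f)
    (hnorm : ∀ x, ruelle p f (fun _ => 1) x = 1)
    (hν : ∀ φ : (ℕ → A) → ℝ, Continuous φ → ∫ x, ruelle p f φ x ∂ν = ∫ x, φ x ∂ν) :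
    ν.map shift = ν := by
  apply ext_of_integral_eq
  intro g hg
  rw [integral_map continuous_shift.measurable.aemeasurable hg.aestronglyMeasurable]
  have h1 := hν (g ∘ shift) (hg.comp continuous_shift)
  have h2 : ∀ x, ruelle p f (g ∘ shift) x = g x := by
    intro x
    unfold ruelle
    simp only [Function.comp_apply, shift_cons]
    rw [integral_mul_const, integral_exp_cons p hnorm, one_mul]
  simp only [h2] at h1
  exact h1.symm

lemma nu_shift_iter_inv (hf : Continuous f)
    (hnorm : ∀ x, ruelle p f (fun _ => 1) x = 1)
    (hν : ∀ φ : (ℕ → A) → ℝ, Continuous φ → ∫ x, ruelle p f φ x ∂ν = ∫ x, φ x ∂ν)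
    (n : ℕ) : ν.map shift^[n] = ν := by
  induction n with
  | zero => simp [Measure.map_id]
  | succ n ih =>
      rw [Function.iterate_succ]
      rw [← Measure.map_map ((continuous_shift_iterate n).measurable) continuous_shift.measurable]
      rw [nu_shift_inv p ν hf hnorm hν, ih]

lemma integral_pi_succ (n : ℕ) (F : (Fin (n + 1) → A) → ℝ) (hF : Continuous F) :
    ∫ c, F c ∂(Measure.pi fun _ : Fin (n + 1) => p)
      = ∫ a, ∫ b, F (Fin.cons b a) ∂p ∂(Measure.pi fun _ : Fin n => p) := by
  have hmp := measurePreserving_piFinSuccAbove (fun _ : Fin (n + 1) => p) 0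
  set e := MeasurableEquiv.piFinSuccAbove (fun _ : Fin (n + 1) => A) 0 with he
  have hGcont : Continuous fun q : A × (Fin n → A) => F (Fin.cons q.1 q.2) := by
    apply hF.comp
    refine continuous_pi fun i => ?_
    refine Fin.cases ?_ ?_ i
    · simpa using continuous_fst
    · intro j
      simpa [Function.comp_def] using (continuous_apply j).comp continuous_snd
  have hint : Integrable (fun q : A × (Fin n → A) => F (Fin.cons q.1 q.2))
      (p.prod (Measure.pi fun _ : Fin n => p)) := cont_integrable _ hGcont
  have h2 : ∫ q, F (Fin.cons q.1 q.2) ∂(p.prod (Measure.pi fun _ : Fin n => p))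
      = ∫ c, F c ∂(Measure.pi fun _ : Fin (n + 1) => p) := by
    rw [← hmp.map_eq,
      integral_map e.measurable.aemeasurable hGcont.aestronglyMeasurable]
    congr 1
    funext c
    congr 1
    show Fin.cons (e c).1 (e c).2 = c
    simp [he, MeasurableEquiv.piFinSuccAbove, Fin.insertNthEquiv, Fin.removeNth_zero,
      Fin.cons_self_tail]
  rw [← h2, integral_prod _ hint]
  exact integral_integral_swap hint

lemma wordCons_zero (a : Fin 0 → A) (z : ℕ → A) : wordCons 0 a z = z := by
  funext i
  simp [wordCons]

lemma key_pushforward (hf : Continuous f)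
    (hnorm : ∀ x, ruelle p f (fun _ => 1) x = 1)
    (hν : ∀ φ : (ℕ → A) → ℝ, Continuous φ → ∫ x, ruelle p f φ x ∂ν = ∫ x, φ x ∂ν)
    (n : ℕ) :
    ∀ φ : (ℕ → A) → ℝ, Continuous φ →
      ∫ x, φ x ∂ν
        = ∫ z, ∫ a, Real.exp (birkhoff n f (wordCons n a z)) * φ (wordCons n a z)
            ∂(Measure.pi fun _ : Fin n => p) ∂ν := by
  induction n with
  | zero =>
      intro φ hφ
      have h : ∀ z : ℕ → A, ∫ a : Fin 0 → A,
          Real.exp (birkhoff 0 f (wordCons 0 a z)) * φ (wordCons 0 a z)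
            ∂(Measure.pi fun _ : Fin 0 => p) = φ z := by
        intro z
        simp [wordCons_zero, birkhoff]
      simp only [h]
  | succ n ih =>
      intro φ hφ
      rw [← hν φ hφ, ih (ruelle p f φ) (ruelle_continuous p hf hφ)]
      congr 1
      funext z
      have inner : ∀ a : Fin n → A,
          Real.exp (birkhoff n f (wordCons n a z)) * ruelle p f φ (wordCons n a z)
            = ∫ b, Real.exp (birkhoff (n + 1) f (wordCons (n + 1) (Fin.cons b a) z))
                * φ (wordCons (n + 1) (Fin.cons b a) z) ∂p := by
        intro a
        unfold ruelle
        rw [← integral_const_mul]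
        congr 1
        funext b
        rw [← cons_wordCons, birkhoff_succ, shift_cons, Real.exp_add]
        ring
      simp only [inner]
      have hFcont : Continuous fun c : Fin (n + 1) → A =>
          Real.exp (birkhoff (n + 1) f (wordCons (n + 1) c z)) * φ (wordCons (n + 1) c z) :=
        (Real.continuous_exp.comp ((continuous_birkhoff _ hf).comp
          (continuous_wordCons_left _ z))).mul (hφ.comp (continuous_wordCons_left _ z))
      rw [integral_pi_succ p n _ hFcont]

lemma abs_birkhoff_le {M : ℝ} (hM : ∀ x, |f x| ≤ M) (n : ℕ) (x : ℕ → A) :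
    |birkhoff n f x| ≤ n * M := by
  calc |birkhoff n f x| ≤ ∑ i ∈ Finset.range n, |f (shift^[i] x)| :=
        Finset.abs_sum_le_sum_abs _ _
    _ ≤ ∑ i ∈ Finset.range n, M := Finset.sum_le_sum fun i _ => hM _
    _ = n * M := by simp [mul_comm]

lemma gamma_proj (n : ℕ) (y : ℕ → A) :
    (gammaMeasure p f n y).map (proj n)
      = (Measure.pi fun _ : Fin n => p).withDensity
          (fun a => ENNReal.ofReal (Real.exp (birkhoff n f (wordCons n a (shift^[n] y))))) := by
  unfold gammaMeasure
  rw [Measure.map_map (continuous_proj n).measurable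
    (continuous_wordCons_left n (shift^[n] y)).measurable]
  have : (proj (A := A) n) ∘ (fun a : Fin n → A => wordCons n a (shift^[n] y)) = id := by
    funext a
    exact proj_wordCons n a _
  rw [this, Measure.map_id]

lemma Gfun_cont (hf : Continuous f) (n : ℕ) :
    Continuous fun a : Fin n → A => ∫ z, Real.exp (birkhoff n f (wordCons n a z)) ∂ν := by
  obtain ⟨M, hM0, hM⟩ := cont_bound (continuous_birkhoff (f := f) n hf)
  apply continuous_of_dominated (bound := fun _ => Real.exp M)
  · intro a
    exact (Real.continuous_exp.comp ((continuous_birkhoff n hf).comp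
      ((continuous_wordCons n).comp (continuous_const.prodMk continuous_id)))).aestronglyMeasurable
  · intro a
    filter_upwards with z
    rw [Real.norm_eq_abs, abs_of_nonneg (Real.exp_pos _).le]
    exact Real.exp_le_exp.2 (abs_le.1 (hM _)).2
  · exact integrable_const _
  · filter_upwards with z
    exact Real.continuous_exp.comp ((continuous_birkhoff n hf).comp
      ((continuous_wordCons n).comp (continuous_id.prodMk continuous_const)))

lemma Gfun_bounds (hf : Continuous f) {M : ℝ} (hM : ∀ x, |f x| ≤ M) (n : ℕ) (a : Fin n → A) :
    Real.exp (-(n * M)) ≤ ∫ z, Real.exp (birkhoff n f (wordCons n a z)) ∂ν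
      ∧ ∫ z, Real.exp (birkhoff n f (wordCons n a z)) ∂ν ≤ Real.exp (n * M) := by
  have hcz : Continuous fun z => Real.exp (birkhoff n f (wordCons n a z)) :=
    Real.continuous_exp.comp ((continuous_birkhoff n hf).comp
      ((continuous_wordCons n).comp (continuous_const.prodMk continuous_id)))
  have hint : Integrable (fun z => Real.exp (birkhoff n f (wordCons n a z))) ν :=
    cont_integrable _ hcz
  have h1 : ∫ _, Real.exp (-((n : ℝ) * M)) ∂ν
      ≤ ∫ z, Real.exp (birkhoff n f (wordCons n a z)) ∂ν := by
    apply integral_mono (integrable_const _) hint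
    intro z
    exact Real.exp_le_exp.2 (neg_le_of_abs_le (abs_birkhoff_le hM n _))
  have h2 : ∫ z, Real.exp (birkhoff n f (wordCons n a z)) ∂ν
      ≤ ∫ _, Real.exp ((n : ℝ) * M) ∂ν := by
    apply integral_mono hint (integrable_const _)
    intro z
    exact Real.exp_le_exp.2 (le_of_abs_le (abs_birkhoff_le hM n _))
  simp only [integral_const, measure_univ, probReal_univ, ENNReal.toReal_one, one_smul, smul_eq_mul] at h1 h2
  constructor
  · exact le_trans (le_of_eq (by norm_num)) h1
  · exact h2.trans (le_of_eq (by norm_num))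

lemma nu_proj (hf : Continuous f)
    (hnorm : ∀ x, ruelle p f (fun _ => 1) x = 1)
    (hν : ∀ φ : (ℕ → A) → ℝ, Continuous φ → ∫ x, ruelle p f φ x ∂ν = ∫ x, φ x ∂ν)
    (n : ℕ) :
    ν.map (proj n) = (Measure.pi fun _ : Fin n => p).withDensity
      (fun a => ENNReal.ofReal (∫ z, Real.exp (birkhoff n f (wordCons n a z)) ∂ν)) := by
  obtain ⟨M, hM0, hM⟩ := cont_bound hf
  set G : (Fin n → A) → ℝ := fun a => ∫ z, Real.exp (birkhoff n f (wordCons n a z)) ∂ν with hGdef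
  have hGcont : Continuous G := Gfun_cont ν hf n
  have hfin : IsFiniteMeasure ((Measure.pi fun _ : Fin n => p).withDensity
      (fun a => ENNReal.ofReal (G a))) := by
    apply isFiniteMeasure_withDensity (μ := Measure.pi fun _ : Fin n => p)
    apply ne_top_of_le_ne_top (ENNReal.ofReal_ne_top (r := Real.exp (n * M)))
    calc ∫⁻ a, ENNReal.ofReal (G a) ∂(Measure.pi fun _ : Fin n => p)
        ≤ ∫⁻ _, ENNReal.ofReal (Real.exp (n * M)) ∂(Measure.pi fun _ : Fin n => p) := by
          apply lintegral_mono
          intro a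
          exact ENNReal.ofReal_le_ofReal (Gfun_bounds ν hf hM n a).2
      _ = ENNReal.ofReal (Real.exp (n * M)) := by simp
  apply ext_of_integral_eq
  intro ψ hψ
  rw [integral_map (continuous_proj n).measurable.aemeasurable hψ.aestronglyMeasurable]
  have hkey := key_pushforward p ν hf hnorm hν n (ψ ∘ proj n) (hψ.comp (continuous_proj n))
  simp only [Function.comp_apply] at hkey
  rw [hkey]
  have hHcont : Continuous fun q : (ℕ → A) × (Fin n → A) =>
      Real.exp (birkhoff n f (wordCons n q.2 q.1)) * ψ q.2 :=
    (Real.continuous_exp.comp ((continuous_birkhoff n hf).comp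
      ((continuous_wordCons n).comp (continuous_snd.prodMk continuous_fst)))).mul
      (hψ.comp continuous_snd)
  have hHint : Integrable (fun q : (ℕ → A) × (Fin n → A) =>
      Real.exp (birkhoff n f (wordCons n q.2 q.1)) * ψ q.2)
      (ν.prod (Measure.pi fun _ : Fin n => p)) := cont_integrable _ hHcont
  have hswap := integral_integral_swap (f := fun (z : ℕ → A) (a : Fin n → A) =>
    Real.exp (birkhoff n f (wordCons n a z)) * ψ a) hHint
  have hl : ∀ z, ∫ a, Real.exp (birkhoff n f (wordCons n a z)) * ψ (proj n (wordCons n a z))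
      ∂(Measure.pi fun _ : Fin n => p)
      = ∫ a, Real.exp (birkhoff n f (wordCons n a z)) * ψ a ∂(Measure.pi fun _ : Fin n => p) := by
    intro z
    congr 1
    funext a
    rw [proj_wordCons]
  simp only [hl]
  rw [hswap]
  have hr : ∀ a : Fin n → A, ∫ z, Real.exp (birkhoff n f (wordCons n a z)) * ψ a ∂ν
      = G a * ψ a := by
    intro a
    rw [integral_mul_const]
  simp only [hr]
  have hd : (fun a : Fin n → A => ENNReal.ofReal (G a))
      = fun a => ((Real.toNNReal (G a) : ℝ≥0) : ℝ≥0∞) := rfl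
  rw [hd, integral_withDensity_eq_integral_smul (hGcont.measurable.real_toNNReal)]
  congr 1
  funext a
  rw [NNReal.smul_def, smul_eq_mul, Real.coe_toNNReal _ (le_trans (Real.exp_pos _).le
    (Gfun_bounds ν hf hM n a).1)]

end Main

section Entropy

/-- Entropy difference for two equivalent densities over a common base measure. -/
lemma relEnt_withDensity_diff {X : Type*} [MeasurableSpace X]
    (base m : Measure X) [IsProbabilityMeasure base] [IsProbabilityMeasure m]
    (G g : X → ℝ) (hGmeas : Measurable G) (hgmeas : Measurable g)
    (hGpos : ∀ x, 0 < G x) (hgpos : ∀ x, 0 < g x)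
    (hGint : Integrable (fun x => Real.log (G x)) m)
    (hgint : Integrable (fun x => Real.log (g x)) m)
    (hfin : relEnt m (base.withDensity fun x => ENNReal.ofReal (G x)) ≠ ⊤) :
    relEnt m (base.withDensity fun x => ENNReal.ofReal (G x))
      = relEnt m (base.withDensity fun x => ENNReal.ofReal (g x))
        + ((∫ x, (Real.log (g x) - Real.log (G x)) ∂m : ℝ) : EReal) := by
  set wdG := base.withDensity fun x => ENNReal.ofReal (G x) with hwdG
  set wdg := base.withDensity fun x => ENNReal.ofReal (g x) with hwdg
  have hGne0 : ∀ᵐ x ∂base, ENNReal.ofReal (G x) ≠ 0 := by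
    filter_upwards with x
    simp [ENNReal.ofReal_eq_zero, not_le, hGpos x]
  have hgne0 : ∀ᵐ x ∂base, ENNReal.ofReal (g x) ≠ 0 := by
    filter_upwards with x
    simp [ENNReal.ofReal_eq_zero, not_le, hgpos x]
  have hGnetop : ∀ᵐ x ∂base, ENNReal.ofReal (G x) ≠ ⊤ := by
    filter_upwards with x
    exact ENNReal.ofReal_ne_top
  have hgnetop : ∀ᵐ x ∂base, ENNReal.ofReal (g x) ≠ ⊤ := by
    filter_upwards with x
    exact ENNReal.ofReal_ne_top
  have hsfG : SigmaFinite wdG := SigmaFinite.withDensity_of_ne_top hGnetop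
  have hsfg : SigmaFinite wdg := SigmaFinite.withDensity_of_ne_top hgnetop
  have hcond : m ≪ wdG ∧ Integrable (fun x => Real.log (m.rnDeriv wdG x).toReal) m := by
    by_contra h
    rw [relEnt, if_neg h] at hfin
    exact hfin rfl
  have hacG : wdG ≪ base := withDensity_absolutelyContinuous _ _
  have hacg : base ≪ wdg :=
    withDensity_absolutelyContinuous' (hgmeas.ennreal_ofReal).aemeasurable hgne0
  have hm_base : m ≪ base := hcond.1.trans hacG
  have hm_wdg : m ≪ wdg := hm_base.trans hacg
  have hrnG : m.rnDeriv wdG =ᵐ[m] fun x => (ENNReal.ofReal (G x))⁻¹ * m.rnDeriv base x :=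
    hm_base.ae_le (Measure.rnDeriv_withDensity_right m base
      (hGmeas.ennreal_ofReal).aemeasurable hGne0 hGnetop)
  have hrng : m.rnDeriv wdg =ᵐ[m] fun x => (ENNReal.ofReal (g x))⁻¹ * m.rnDeriv base x :=
    hm_base.ae_le (Measure.rnDeriv_withDensity_right m base
      (hgmeas.ennreal_ofReal).aemeasurable hgne0 hgnetop)
  have hpos : ∀ᵐ x ∂m, 0 < m.rnDeriv base x := Measure.rnDeriv_pos hm_base
  have hlt : ∀ᵐ x ∂m, m.rnDeriv base x < ⊤ := hm_base.ae_le (Measure.rnDeriv_lt_top m base)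
  have hlogG : (fun x => Real.log (m.rnDeriv wdG x).toReal)
      =ᵐ[m] fun x => Real.log (m.rnDeriv base x).toReal - Real.log (G x) := by
    filter_upwards [hrnG, hpos, hlt] with x h1 h2 h3
    rw [h1, ENNReal.toReal_mul, ENNReal.toReal_inv, ENNReal.toReal_ofReal (hGpos x).le,
      Real.log_mul (inv_ne_zero (hGpos x).ne') (ENNReal.toReal_pos h2.ne' h3.ne).ne',
      Real.log_inv]
    ring
  have hlogg : (fun x => Real.log (m.rnDeriv wdg x).toReal)
      =ᵐ[m] fun x => Real.log (m.rnDeriv base x).toReal - Real.log (g x) := by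
    filter_upwards [hrng, hpos, hlt] with x h1 h2 h3
    rw [h1, ENNReal.toReal_mul, ENNReal.toReal_inv, ENNReal.toReal_ofReal (hgpos x).le,
      Real.log_mul (inv_ne_zero (hgpos x).ne') (ENNReal.toReal_pos h2.ne' h3.ne).ne',
      Real.log_inv]
    ring
  have hLint : Integrable (fun x => Real.log (m.rnDeriv base x).toReal) m := by
    apply (hcond.2.add hGint).congr
    filter_upwards [hlogG] with x hx
    simp only [Pi.add_apply, hx]
    ring
  have hlogg_int : Integrable (fun x => Real.log (m.rnDeriv wdg x).toReal) m :=
    ((hLint.sub hgint).congr hlogg.symm)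
  rw [relEnt, if_pos hcond, relEnt, if_pos ⟨hm_wdg, hlogg_int⟩, ← EReal.coe_add]
  congr 1
  rw [integral_congr_ae hlogG, integral_congr_ae hlogg,
    integral_sub hLint hGint, integral_sub hLint hgint, integral_sub hgint hGint]
  ring

end Entropy

/-- Let `f̄` be an `α`-Hölder normalized potential,
`γ_n(·|y) = L_{f̄}^n(1_·)(σ^n y)`, and `ν` a Borel probability measure with `L_{f̄}* ν = ν`.
If `μ` is shift-invariant with `H_{Λ_n}(μ|ν) < ∞` for all `n`, then for every `y` and `n ≥ 1`,
`H_{Λ_n}(μ|ν) = H_{Λ_n}(μ|γ_n(·|y))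
  + ∫ [S_n(f̄)(x_{Λ_n} y_{Λ_n^c}) - log ∫ exp(S_n(f̄)(x_{Λ_n} z_{Λ_n^c})) dν(z)] dμ(x)`. -/
theorem statement10
    (p : Measure A) [IsProbabilityMeasure p]
    (hsupp : ∀ U : Set A, IsOpen U → U.Nonempty → 0 < p U)
    (α : ℝ) (hα0 : 0 < α) (hα1 : α < 1)
    (f : (ℕ → A) → ℝ) (hf : IsHolder α f)
    (hnorm : ∀ x, ruelle p f (fun _ => 1) x = 1)
    (ν : Measure (ℕ → A)) [IsProbabilityMeasure ν]
    (hν : ∀ φ : (ℕ → A) → ℝ, Continuous φ →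
      ∫ x, ruelle p f φ x ∂ν = ∫ x, φ x ∂ν)
    (μ : Measure (ℕ → A)) [IsProbabilityMeasure μ]
    (hinv : μ.map shift = μ)
    (hfin : ∀ m : ℕ, relEntN m μ ν ≠ ⊤)
    (y : ℕ → A) (n : ℕ) (hn : 1 ≤ n) :
    relEntN n μ ν
      = relEntN n μ (gammaMeasure p f n y)
        + ((∫ x, (birkhoff n f (concatAt n x y)
            - Real.log (∫ z, Real.exp (birkhoff n f (concatAt n x z)) ∂ν)) ∂μ : ℝ) : EReal) := by
  have hfc : Continuous f := hf.continuous hα0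
  obtain ⟨M, hM0, hM⟩ := cont_bound hfc
  set pin := Measure.pi fun _ : Fin n => p with hpin
  set m := μ.map (proj n) with hmdef
  haveI hmprob : IsProbabilityMeasure m :=
    Measure.isProbabilityMeasure_map (continuous_proj n).measurable.aemeasurable
  set G : (Fin n → A) → ℝ := fun a => ∫ z, Real.exp (birkhoff n f (wordCons n a z)) ∂ν with hG
  set g : (Fin n → A) → ℝ := fun a => Real.exp (birkhoff n f (wordCons n a (shift^[n] y)))
    with hgdef
  have hGmeas : Measurable G := (Gfun_cont ν hfc n).measurable
  have hgcont : Continuous g := Real.continuous_exp.comp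
    ((continuous_birkhoff n hfc).comp (continuous_wordCons_left n _))
  have hgmeas : Measurable g := hgcont.measurable
  have hGpos : ∀ a, 0 < G a := fun a =>
    lt_of_lt_of_le (Real.exp_pos _) (Gfun_bounds ν hfc hM n a).1
  have hgpos : ∀ a, 0 < g a := fun a => Real.exp_pos _
  have hGlog_bound : ∀ a, |Real.log (G a)| ≤ n * M := by
    intro a
    rw [abs_le]
    constructor
    · rw [← Real.log_exp (-((n : ℝ) * M))]
      exact Real.log_le_log (Real.exp_pos _) (Gfun_bounds ν hfc hM n a).1
    · rw [← Real.log_exp ((n : ℝ) * M)]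
      exact Real.log_le_log (hGpos a) (Gfun_bounds ν hfc hM n a).2
  have hglog_bound : ∀ a, |Real.log (g a)| ≤ n * M := by
    intro a
    rw [hgdef, Real.log_exp]
    exact abs_birkhoff_le hM n _
  have hGint : Integrable (fun a => Real.log (G a)) m := by
    apply (integrable_const ((n : ℝ) * M)).mono'
      (Real.measurable_log.comp hGmeas).aestronglyMeasurable
    filter_upwards with a
    rw [Real.norm_eq_abs]
    exact hGlog_bound a
  have hgint : Integrable (fun a => Real.log (g a)) m := by
    apply (integrable_const ((n : ℝ) * M)).mono'
      (Real.measurable_log.comp hgmeas).aestronglyMeasurable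
    filter_upwards with a
    rw [Real.norm_eq_abs]
    exact hglog_bound a
  have hν_eq : ν.map (proj n) = pin.withDensity (fun a => ENNReal.ofReal (G a)) :=
    nu_proj p ν hfc hnorm hν n
  have hγ_eq : (gammaMeasure p f n y).map (proj n)
      = pin.withDensity (fun a => ENNReal.ofReal (g a)) := gamma_proj p n y
  have hfin' : relEnt m (pin.withDensity fun a => ENNReal.ofReal (G a)) ≠ ⊤ := by
    have h := hfin n
    unfold relEntN at h
    rwa [hν_eq] at h
  have main := relEnt_withDensity_diff pin m G g hGmeas hgmeas hGpos hgpos hGint hgint hfin'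
  show relEnt m (ν.map (proj n)) = relEnt m ((gammaMeasure p f n y).map (proj n)) + _
  rw [hν_eq, hγ_eq, main]
  congr 2
  -- transfer the integral from m to μ
  have hshiftinv : ν.map shift^[n] = ν := nu_shift_iter_inv p ν hfc hnorm hν n
  have hGproj : ∀ x : ℕ → A,
      ∫ z, Real.exp (birkhoff n f (concatAt n x z)) ∂ν = G (proj n x) := by
    intro x
    have hc : Continuous fun w : ℕ → A => Real.exp (birkhoff n f (wordCons n (proj n x) w)) :=
      Real.continuous_exp.comp ((continuous_birkhoff n hfc).comp
        (continuous_wordCons_right n (proj n x)))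
    calc ∫ z, Real.exp (birkhoff n f (concatAt n x z)) ∂ν
        = ∫ z, Real.exp (birkhoff n f (wordCons n (proj n x) (shift^[n] z))) ∂ν := by
          congr 1
          funext z
          rw [wordCons_proj]
      _ = ∫ w, Real.exp (birkhoff n f (wordCons n (proj n x) w)) ∂(ν.map shift^[n]) := by
          rw [integral_map (continuous_shift_iterate n).measurable.aemeasurable
            hc.aestronglyMeasurable]
      _ = G (proj n x) := by rw [hshiftinv]
  have hmeas2 : AEStronglyMeasurable (fun a : Fin n → A => Real.log (g a) - Real.log (G a))
      (Measure.map (proj n) μ) :=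
    ((Real.measurable_log.comp hgmeas).sub (Real.measurable_log.comp hGmeas)).aestronglyMeasurable
  rw [hmdef, integral_map (continuous_proj n).measurable.aemeasurable hmeas2]
  congr 1
  funext x
  rw [hgdef, Real.log_exp, wordCons_proj, hGproj x]

end Paper
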